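/- Let k be a real number, let A : ℝ → M₂(ℝ) and G : ℝ → M₂(ℝ) with A differentiable at t, suppose trace(G(t)) = 0, and suppose A′(t) = G(t)·A(t) + A(t)·G(t)ᵀ − 2(G(t):A(t))·A(t) − 2k(2A(t) − I₂). Then the function s ↦ det(A(s)) is differentiable at t and its derivative equals −4((G(t):A(t)) + 2k)·det A(t) + 2k·trace A(t). -/

import Mathlib

open Matrix

/-- The Frobenius inner product of two real 2×2 matrices: `G:A = ∑ᵢⱼ Gᵢⱼ Aᵢⱼ`. -/
def frob (G A : Matrix (Fin 2) (Fin 2) ℝ) : ℝ := ∑ i, ∑ j, G i j * A i j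

/-- If `A : ℝ → M₂(ℝ)` is differentiable at `t` with
`A′(t) = G(t)·A(t) + A(t)·G(t)ᵀ − 2(G(t):A(t))·A(t) − 2k(2A(t) − I₂)` (entrywise),
and `trace G(t) = 0`, then `s ↦ det A(s)` is differentiable at `t` with derivative
`−4((G(t):A(t)) + 2k)·det A(t) + 2k·trace A(t)`. -/
theorem det_evolution_DA (k : ℝ) (A G : ℝ → Matrix (Fin 2) (Fin 2) ℝ) (t : ℝ)
    (hG : (G t).trace = 0)
    (hA : ∀ i j, HasDerivAt (fun s => A s i j)
      ((G t * A t + A t * (G t)ᵀ - (2 * frob (G t) (A t)) • A t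
        - (2 * k) • ((2 : ℝ) • A t - 1)) i j) t) :
    HasDerivAt (fun s => (A s).det)
      (-4 * (frob (G t) (A t) + 2 * k) * (A t).det + 2 * k * (A t).trace) t := by
  have h00 := hA 0 0
  have h01 := hA 0 1
  have h10 := hA 1 0
  have h11 := hA 1 1
  have hd : HasDerivAt (fun s => A s 0 0 * A s 1 1 - A s 0 1 * A s 1 0) _ t :=
    ((h00.mul h11).sub (h01.mul h10))
  have heq : (fun s => (A s).det) = fun s => A s 0 0 * A s 1 1 - A s 0 1 * A s 1 0 := by
    funext s; rw [Matrix.det_fin_two]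
  rw [heq]
  convert hd using 1
  have htr : G t 0 0 + G t 1 1 = 0 := by
    have := hG; rw [Matrix.trace_fin_two] at this; linarith
  simp only [Matrix.det_fin_two, Matrix.trace_fin_two, frob, Fin.sum_univ_two,
    Matrix.sub_apply, Matrix.add_apply, Matrix.mul_apply, Matrix.smul_apply,
    Matrix.one_apply, Matrix.transpose_apply, smul_eq_mul]
  norm_num
  linear_combination (-2 : ℝ) * (A t 0 0 * A t 1 1 - A t 0 1 * A t 1 0) * htr
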